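/- Let G ≤ Isom(ℝ²) be the subgroup generated by the isometries c(v) = R_{π/2} v and d(v) = R_{π} v + (1,0). Then the set of translations contained in G (elements whose linear part is the identity) is exactly the subgroup generated by the translations t₁ = τ_{(1,0)} and t₂ = τ_{(0,1)}. -/

import Mathlib

open Real

/-- The Euclidean plane `E²`. -/
abbrev E2 : Type := EuclideanSpace ℝ (Fin 2)

/-- The vector `(x, y)` of the Euclidean plane. -/
def vecE (x y : ℝ) : E2 := WithLp.toLp 2 ![x, y]

/-- Rotation of the Euclidean plane:
`R_θ(x,y) = (x cos θ + y sin θ, −x sin θ + y cos θ)`. -/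
noncomputable def rotE (θ : ℝ) (v : E2) : E2 :=
  vecE (v 0 * Real.cos θ + v 1 * Real.sin θ) (-v 0 * Real.sin θ + v 1 * Real.cos θ)

@[simp] lemma vecE_zero (x y : ℝ) : vecE x y 0 = x := rfl
@[simp] lemma vecE_one (x y : ℝ) : vecE x y 1 = y := rfl

lemma e2ext {a b : E2} (h0 : a 0 = b 0) (h1 : a 1 = b 1) : a = b := by
  ext i; fin_cases i <;> assumption

/-- rotation by π/2 as a plain map -/
def Jm (v : E2) : E2 := vecE (v 1) (-v 0)

/-- lattice point -/
noncomputable def lat (m n : ℤ) : E2 := vecE (m : ℝ) (n : ℝ)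

lemma Jit_add : ∀ (k : ℕ) (a b : E2), Jm^[k] (a + b) = Jm^[k] a + Jm^[k] b := by
  intro k
  induction k with
  | zero => intro a b; simp
  | succ k ih =>
    intro a b
    rw [Function.iterate_succ_apply, Function.iterate_succ_apply,
      Function.iterate_succ_apply]
    rw [show Jm (a + b) = Jm a + Jm b from e2ext (by simp [Jm]) (by simp [Jm]; ring)]
    exact ih _ _

lemma Jm_lat (m n : ℤ) : Jm (lat m n) = lat n (-m) := by
  apply e2ext <;> simp [Jm, lat]

lemma Jit_lat : ∀ (k : ℕ) (m n : ℤ), ∃ m' n', Jm^[k] (lat m n) = lat m' n' := by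
  intro k
  induction k with
  | zero => intro m n; exact ⟨m, n, rfl⟩
  | succ k ih =>
    intro m n
    rw [Function.iterate_succ_apply, Jm_lat]
    exact ih _ _

lemma Jm_zero : Jm 0 = 0 := by apply e2ext <;> simp [Jm]

lemma Jit_zero (k : ℕ) : Jm^[k] 0 = 0 := Function.iterate_fixed Jm_zero k

lemma J4 : Jm^[4] = id := by
  funext v
  show Jm (Jm (Jm (Jm v))) = v
  apply e2ext <;> simp [Jm]

lemma Jit_inv' (k : ℕ) (v : E2) : Jm^[k] (Jm^[3 * k] v) = v := by
  rw [← Function.iterate_add_apply]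
  have : k + 3 * k = 4 * k := by ring
  rw [this, Function.iterate_mul, J4, Function.iterate_id, id]

lemma Jit_inv (k : ℕ) (v : E2) : Jm^[3 * k] (Jm^[k] v) = v := by
  rw [← Function.iterate_add_apply]
  have : 3 * k + k = 4 * k := by ring
  rw [this, Function.iterate_mul, J4, Function.iterate_id, id]

/-- Subgroup of translations. -/
noncomputable def translSub : Subgroup (E2 ≃ᵢ E2) where
  carrier := {g | ∃ w : E2, ∀ v : E2, g v = v + w}
  one_mem' := ⟨0, fun v => by simp⟩
  mul_mem' := by
    rintro a b ⟨wa, ha⟩ ⟨wb, hb⟩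
    exact ⟨wb + wa, fun v => by
      show a (b v) = v + (wb + wa)
      rw [hb, ha, add_assoc]⟩
  inv_mem' := by
    rintro a ⟨w, ha⟩
    refine ⟨-w, fun v => ?_⟩
    apply a.injective
    have h1 : a (a⁻¹ v) = v := by simp
    rw [h1, ha]
    abel

/-- Subgroup of isometries of the form `v ↦ J^k v + (m, n)`. -/
noncomputable def latSub : Subgroup (E2 ≃ᵢ E2) where
  carrier := {g | ∃ (k : ℕ) (m n : ℤ), ∀ v : E2, g v = Jm^[k] v + lat m n}
  one_mem' := ⟨0, 0, 0, fun v => by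
    simp [lat]
    apply e2ext <;> simp⟩
  mul_mem' := by
    rintro a b ⟨ka, ma, na, ha⟩ ⟨kb, mb, nb, hb⟩
    obtain ⟨m', n', hmn⟩ := Jit_lat ka mb nb
    refine ⟨ka + kb, ma + m', na + n', fun v => ?_⟩
    show a (b v) = _
    rw [hb, ha, Jit_add, hmn, Function.iterate_add_apply]
    apply e2ext <;> simp [lat] <;> push_cast <;> ring
  inv_mem' := by
    rintro a ⟨k, m, n, ha⟩
    obtain ⟨m', n', hmn⟩ := Jit_lat (3 * k) (-m) (-n)
    refine ⟨3 * k, m', n', fun v => ?_⟩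
    apply a.injective
    have h1 : a (a⁻¹ v) = v := by simp
    rw [h1, ha, ← hmn, ← Jit_add, Jit_inv']
    have hneg : lat (-m) (-n) = -(lat m n) := e2ext (by simp [lat]) (by simp [lat])
    rw [hneg]
    abel

/-- For `c(v) = R_{π/2} v` and `d(v) = R_π v + (1,0)` in `Isom(E²)`, the set of
translations (elements whose linear part is the identity, i.e. of the form
`v ↦ v + w`) contained in the subgroup `G = ⟨c, d⟩` is exactly the subgroup generated
by the translations `t₁ = τ_{(1,0)}` and `t₂ = τ_{(0,1)}`. -/
theorem stmt8 (c d t₁ t₂ : E2 ≃ᵢ E2)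
    (hc : ∀ v : E2, c v = rotE (π / 2) v)
    (hd : ∀ v : E2, d v = rotE π v + vecE 1 0)
    (ht₁ : ∀ v : E2, t₁ v = v + vecE 1 0)
    (ht₂ : ∀ v : E2, t₂ v = v + vecE 0 1) :
    {g : E2 ≃ᵢ E2 | g ∈ Subgroup.closure {c, d} ∧ ∃ w : E2, ∀ v : E2, g v = v + w}
      = (Subgroup.closure {t₁, t₂} : Set (E2 ≃ᵢ E2)) := by
  have hcJ : ∀ v, c v = Jm v := by
    intro v; rw [hc]; apply e2ext <;> simp [rotE, Jm]
  have hdv : ∀ v, d v = Jm^[2] v + lat 1 0 := by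
    intro v; rw [hd]
    show _ = Jm (Jm v) + lat 1 0
    apply e2ext <;> simp [rotE, Jm, lat]
  have hclos : Subgroup.closure {c, d} ≤ latSub := by
    rw [Subgroup.closure_le]
    intro g hg
    simp only [Set.mem_insert_iff, Set.mem_singleton_iff] at hg
    rcases hg with rfl | rfl
    · refine ⟨1, 0, 0, fun v => ?_⟩
      rw [hcJ]
      have h0 : lat 0 0 = 0 := e2ext (by simp [lat]) (by simp [lat])
      show Jm v = Jm^[1] v + lat 0 0
      rw [h0, add_zero]; rfl
    · exact ⟨2, 1, 0, hdv⟩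
  have tz : ∀ (t : E2 ≃ᵢ E2) (w : E2), (∀ v, t v = v + w) →
      ∀ (m : ℤ) (v : E2), (t ^ m) v = v + (m : ℝ) • w := by
    intro t w ht
    have hinv : ∀ v, t⁻¹ v = v + -w := by
      intro v; apply t.injective
      have h1 : t (t⁻¹ v) = v := by simp
      rw [h1, ht]; abel
    intro m
    induction m using Int.induction_on with
    | zero => intro v; simp
    | succ m ih =>
      intro v
      rw [zpow_add_one]
      show (t ^ (m : ℤ)) (t v) = _
      rw [ht, ih]
      push_cast
      rw [add_smul, one_smul]
      abel
    | pred m ih =>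
      intro v
      rw [zpow_sub_one]
      show (t ^ (-m : ℤ)) (t⁻¹ v) = _
      rw [hinv, ih]
      push_cast
      rw [sub_smul, one_smul]
      abel
  have hcm : c ∈ Subgroup.closure {c, d} := Subgroup.subset_closure (by simp)
  have hdm : d ∈ Subgroup.closure {c, d} := Subgroup.subset_closure (by simp)
  have ht1mem : t₁ ∈ Subgroup.closure {c, d} := by
    have heq : t₁ = d * c * c := by
      apply IsometryEquiv.ext; intro v
      show t₁ v = d (c (c v))
      rw [ht₁, hcJ, hcJ, hd]
      apply e2ext <;> simp [rotE, Jm]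
    rw [heq]
    exact mul_mem (mul_mem hdm hcm) hcm
  have ht2mem : t₂ ∈ Subgroup.closure {c, d} := by
    have hinv1 : ∀ u, t₁⁻¹ u = u + -(vecE 1 0) := by
      intro u
      have := tz t₁ _ ht₁ (-1) u
      rw [zpow_neg_one] at this
      rw [this]
      apply e2ext <;> simp
    have heq : t₂ = c * t₁⁻¹ * c⁻¹ := by
      apply IsometryEquiv.ext; intro v
      show t₂ v = c (t₁⁻¹ (c⁻¹ v))
      obtain ⟨u, rfl⟩ : ∃ u, v = c u := ⟨c⁻¹ v, by simp⟩
      have h3 : c⁻¹ (c u) = u := by simp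
      rw [ht₂, h3, hinv1, hcJ, hcJ]
      apply e2ext <;> simp [Jm] <;> ring
    rw [heq]
    exact mul_mem (mul_mem hcm (inv_mem ht1mem)) (inv_mem hcm)
  ext g
  simp only [Set.mem_setOf_eq, SetLike.mem_coe]
  constructor
  · rintro ⟨hg, w, hw⟩
    obtain ⟨k, m, n, hgk⟩ := hclos hg
    have h0 : w = lat m n := by
      have h1 := hw 0
      have h2 := hgk 0
      rw [Jit_zero, zero_add] at h2
      rw [zero_add] at h1
      exact h1.symm.trans h2
    have hg2 : g = t₁ ^ m * t₂ ^ n := by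
      apply IsometryEquiv.ext; intro v
      show g v = (t₁ ^ m) ((t₂ ^ n) v)
      rw [hw, h0, tz t₂ _ ht₂ n v, tz t₁ _ ht₁ m]
      apply e2ext <;> simp [lat]
    rw [hg2]
    exact mul_mem (zpow_mem (Subgroup.subset_closure (by simp)) m)
      (zpow_mem (Subgroup.subset_closure (by simp)) n)
  · intro hg
    have hT : Subgroup.closure {t₁, t₂} ≤ translSub := by
      rw [Subgroup.closure_le]
      intro x hx
      simp only [Set.mem_insert_iff, Set.mem_singleton_iff] at hx
      rcases hx with rfl | rfl
      · exact ⟨vecE 1 0, ht₁⟩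
      · exact ⟨vecE 0 1, ht₂⟩
    have hcd : Subgroup.closure {t₁, t₂} ≤ Subgroup.closure {c, d} := by
      rw [Subgroup.closure_le]
      intro x hx
      simp only [Set.mem_insert_iff, Set.mem_singleton_iff] at hx
      rcases hx with rfl | rfl
      · exact ht1mem
      · exact ht2mem
    exact ⟨hcd hg, hT hg⟩
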